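/- Under the hole-punching graph-cluster randomization design with 0 < p_t < 1 and 0 < p_hp < 1, suppose all potential outcomes are non-negative: Y_i(t) ≥ 0 for all units i and t ∈ {0,1}. Let τ̂ = μ̂(1) − μ̂(0) and define the plug-in variance estimator V̂ar[τ̂] = V̂ar[μ̂(1)] + V̂ar[μ̂(0)] − 2·Ĉov[μ̂(1), μ̂(0)], where V̂ar[μ̂(t)] is the unbiased cluster-form variance estimator (1/N²)·[ (1/p(t)² − 1/p(t,t))·Σ_{c∈𝒞} Ŝ_c(t,t) + (1/p(t,t) − 1/p(t))·Q̂(t,t) ] and Ĉov[μ̂(1), μ̂(0)] is the cluster-form covariance estimator (1/N²)·[ (1/(p(1)·p(0)) − 1/p(1,0))·Σ_{c∈𝒞} Ŝ_c(1,0) − Q̂(1,1)/(2·p(1)) − Q̂(0,0)/(2·p(0)) ], with Ŝ_c(t1,t2) = Σ_{i∈c: Z_i=t1} Σ_{j∈c: Z_j=t2} Y_i(t1)·Y_j(t2) and Q̂(t,t) = Σ_{i: Z_i=t} Y_i(t)². Then the estimator is conservative: E[V̂ar[τ̂]] ≥ Var[τ̂]. -/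

import Mathlib

open MeasureTheory ProbabilityTheory

/-- The Bernoulli measure on `Bool` with success probability `p`. -/
noncomputable def boolBernoulliMeasure (p : ℝ) : Measure Bool :=
  ENNReal.ofReal p • Measure.dirac true + ENNReal.ofReal (1 - p) • Measure.dirac false

instance boolBernoulliMeasure.instIsFiniteMeasure (p : ℝ) :
    IsFiniteMeasure (boolBernoulliMeasure p) where
  measure_univ_lt_top := by
    simp [boolBernoulliMeasure]

/-- The hole-punching graph-cluster randomization design measure on the product space
`(C → Bool) × (Fin N → Bool)`: i.i.d. Bernoulli(`pt`) cluster-level assignments and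
i.i.d. Bernoulli(`php`) unit-level flips, all mutually independent. -/
noncomputable def designMeasure (C : Type*) [Fintype C] (N : ℕ) (pt php : ℝ) :
    Measure ((C → Bool) × (Fin N → Bool)) :=
  (Measure.pi fun _ : C => boolBernoulliMeasure pt).prod
    (Measure.pi fun _ : Fin N => boolBernoulliMeasure php)

/-- The treatment `Z_i` of unit `i`: cluster assignment XOR individual flip. -/
def treat {C : Type*} {N : ℕ} (c : Fin N → C) (i : Fin N)
    (ω : (C → Bool) × (Fin N → Bool)) : Bool :=
  xor (ω.1 (c i)) (ω.2 i)

/-- The marginal propensity `p_i(t) = Pr(Z_i = t)`. -/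
noncomputable def margProp {C : Type*} [Fintype C] {N : ℕ} (pt php : ℝ) (c : Fin N → C)
    (i : Fin N) (t : Bool) : ℝ :=
  (designMeasure C N pt php {ω | treat c i ω = t}).toReal

/-- The joint propensity `p_{ij}(t₁,t₂) = Pr(Z_i = t₁ ∧ Z_j = t₂)`. -/
noncomputable def jointProp {C : Type*} [Fintype C] {N : ℕ} (pt php : ℝ) (c : Fin N → C)
    (i j : Fin N) (t1 t2 : Bool) : ℝ :=
  (designMeasure C N pt php {ω | treat c i ω = t1 ∧ treat c j ω = t2}).toReal

/-- The Horvitz–Thompson estimator `μ̂(t)`. -/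
noncomputable def htEst {C : Type*} [Fintype C] {N : ℕ} (pt php : ℝ) (c : Fin N → C)
    (Y : Fin N → Bool → ℝ) (t : Bool) (ω : (C → Bool) × (Fin N → Bool)) : ℝ :=
  (1 / (N : ℝ)) * ∑ i, if treat c i ω = t then Y i t / margProp pt php c i t else 0

/-- The realized within-cluster sum `Ŝ_c(t1,t2) = Σ_{i∈c: Z_i=t1} Σ_{j∈c: Z_j=t2} Y_i(t1)·Y_j(t2)`
for cluster `k`, as a function of the random assignment `ω`. -/
noncomputable def Shat {C : Type*} [DecidableEq C] {N : ℕ} (c : Fin N → C)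
    (Y : Fin N → Bool → ℝ) (t1 t2 : Bool) (k : C)
    (ω : (C → Bool) × (Fin N → Bool)) : ℝ :=
  ∑ i ∈ Finset.univ.filter (fun i => c i = k ∧ treat c i ω = t1),
    ∑ j ∈ Finset.univ.filter (fun j => c j = k ∧ treat c j ω = t2), Y i t1 * Y j t2

/-- The realized diagonal sum `Q̂(t,t) = Σ_{i: Z_i=t} Y_i(t)²`, as a function of the random
assignment `ω`. -/
noncomputable def Qhat {C : Type*} {N : ℕ} (c : Fin N → C)
    (Y : Fin N → Bool → ℝ) (t : Bool) (ω : (C → Bool) × (Fin N → Bool)) : ℝ :=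
  ∑ i ∈ Finset.univ.filter (fun i => treat c i ω = t), Y i t ^ 2

/-- The cluster-form variance estimator
`V̂ar[μ̂(t)] = (1/N²)·[(1/p(t)² − 1/p(t,t))·Σ_c Ŝ_c(t,t) + (1/p(t,t) − 1/p(t))·Q̂(t,t)]`. -/
noncomputable def varHat {C : Type*} [Fintype C] [DecidableEq C] {N : ℕ} (c : Fin N → C)
    (Y : Fin N → Bool → ℝ) (p : Bool → ℝ) (pj : Bool → Bool → ℝ) (t : Bool)
    (ω : (C → Bool) × (Fin N → Bool)) : ℝ :=
  (1 / (N : ℝ) ^ 2) *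
    ((1 / (p t) ^ 2 - 1 / pj t t) * (∑ k : C, Shat c Y t t k ω)
      + (1 / pj t t - 1 / p t) * Qhat c Y t ω)

/-- The cluster-form covariance estimator
`Ĉov[μ̂(t1),μ̂(t2)] = (1/N²)·[(1/(p(t1)·p(t2)) − 1/p(t1,t2))·Σ_c Ŝ_c(t1,t2)
− Q̂(t1,t1)/(2·p(t1)) − Q̂(t2,t2)/(2·p(t2))]`. -/
noncomputable def covHat {C : Type*} [Fintype C] [DecidableEq C] {N : ℕ} (c : Fin N → C)
    (Y : Fin N → Bool → ℝ) (p : Bool → ℝ) (pj : Bool → Bool → ℝ) (t1 t2 : Bool)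
    (ω : (C → Bool) × (Fin N → Bool)) : ℝ :=
  (1 / (N : ℝ) ^ 2) *
    ((1 / (p t1 * p t2) - 1 / pj t1 t2) * (∑ k : C, Shat c Y t1 t2 k ω)
      - Qhat c Y t1 ω / (2 * p t1) - Qhat c Y t2 ω / (2 * p t2))

/-- The covariance of two real random variables: `Cov[X,Y] = E[(X − E X)(Y − E Y)]`. -/
noncomputable def cov {Ω : Type*} [MeasurableSpace Ω] (P : Measure Ω) (X Y : Ω → ℝ) : ℝ :=
  ∫ ω, (X ω - ∫ x, X x ∂P) * (Y ω - ∫ x, Y x ∂P) ∂P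

/-! ### Auxiliary lemmas -/

section AuxMeasure

lemma HP.bern_prob {p : ℝ} (h0 : 0 ≤ p) (h1 : p ≤ 1) :
    IsProbabilityMeasure (boolBernoulliMeasure p) := by
  constructor
  simp only [boolBernoulliMeasure, Measure.coe_add, Measure.coe_smul, Pi.add_apply, Pi.smul_apply,
    Measure.dirac_apply' _ MeasurableSet.univ, Set.indicator_univ, Pi.one_apply, smul_eq_mul,
    mul_one]
  rw [← ENNReal.ofReal_add h0 (by linarith)]
  norm_num

lemma HP.bern_singleton_pos {p : ℝ} (h0 : 0 < p) (h1 : p < 1) (b : Bool) :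
    boolBernoulliMeasure p {b} ≠ 0 := by
  cases b <;> simp [boolBernoulliMeasure, Measure.dirac_apply] <;> linarith

/-- `HP.onePt k s k' = if k' = k then s else univ`. -/
def HP.onePt {α : Type*} [DecidableEq α] (k : α) (s : Set Bool) : α → Set Bool :=
  fun k' => if k' = k then s else Set.univ

def HP.twoPt {α : Type*} [DecidableEq α] (k l : α) (s t : Set Bool) : α → Set Bool :=
  fun k' => if k' = k then s else if k' = l then t else Set.univ

lemma HP.mem_pi_onePt {α : Type*} [DecidableEq α] {f : α → Bool} {k : α} {s : Set Bool} :
    f ∈ Set.univ.pi (HP.onePt k s) ↔ f k ∈ s := by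
  simp only [Set.mem_pi, Set.mem_univ, forall_true_left, HP.onePt]
  constructor
  · intro h; simpa using h k
  · intro h k'
    by_cases hk : k' = k
    · subst hk; simpa using h
    · simp [hk]

lemma HP.mem_pi_twoPt {α : Type*} [DecidableEq α] {f : α → Bool} {k l : α} (hkl : k ≠ l)
    {s t : Set Bool} :
    f ∈ Set.univ.pi (HP.twoPt k l s t) ↔ f k ∈ s ∧ f l ∈ t := by
  simp only [Set.mem_pi, Set.mem_univ, forall_true_left, HP.twoPt]
  constructor
  · intro h
    refine ⟨?_, ?_⟩
    · simpa using h k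
    · have := h l; simpa [hkl.symm] using this
  · rintro ⟨h1, h2⟩ k'
    by_cases hk : k' = k
    · subst hk; simpa using h1
    · by_cases hl : k' = l
      · subst hl; simpa [hk] using h2
      · simp [hk, hl]

lemma HP.prod_onePt {α : Type*} [Fintype α] [DecidableEq α] (μ : Measure Bool)
    (hμ : μ Set.univ = 1) (k : α) (s : Set Bool) :
    ∏ x, μ (HP.onePt k s x) = μ s := by
  have h : ∀ x, μ (HP.onePt k s x) = if x = k then μ s else 1 := by
    intro x; unfold HP.onePt; split
    · rfl
    · exact hμ
  simp only [h, Finset.prod_ite_eq', Finset.mem_univ, if_true]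

lemma HP.prod_twoPt {α : Type*} [Fintype α] [DecidableEq α] (μ : Measure Bool)
    (hμ : μ Set.univ = 1) {k l : α} (hkl : k ≠ l) (s t : Set Bool) :
    ∏ x, μ (HP.twoPt k l s t x) = μ s * μ t := by
  have h : ∀ x ∈ Finset.univ, x ∉ ({k, l} : Finset α) → μ (HP.twoPt k l s t x) = 1 := by
    intro x _ hx
    simp only [Finset.mem_insert, Finset.mem_singleton, not_or] at hx
    simp only [HP.twoPt, if_neg hx.1, if_neg hx.2]; exact hμ
  rw [← Finset.prod_subset (Finset.subset_univ ({k, l} : Finset α)) h,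
    Finset.prod_pair hkl]
  simp [HP.twoPt, hkl.symm]

variable {C : Type*} [Fintype C] [DecidableEq C] {N : ℕ}

lemma HP.cylinder_measure (pt php : ℝ) (g : C → Set Bool) (h : Fin N → Set Bool) :
    designMeasure C N pt php ((Set.pi Set.univ g) ×ˢ (Set.pi Set.univ h))
      = (∏ k, boolBernoulliMeasure pt (g k)) * ∏ i, boolBernoulliMeasure php (h i) := by
  rw [designMeasure, Measure.prod_prod, Measure.pi_pi, Measure.pi_pi]

lemma HP.design_prob {pt php : ℝ} (hpt0 : 0 ≤ pt) (hpt1 : pt ≤ 1) (hphp0 : 0 ≤ php)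
    (hphp1 : php ≤ 1) : IsProbabilityMeasure (designMeasure C N pt php) := by
  haveI := HP.bern_prob hpt0 hpt1
  haveI := HP.bern_prob hphp0 hphp1
  unfold designMeasure
  infer_instance

lemma HP.xor_eq_iff (a b t : Bool) : (xor a b = t) ↔ b = xor a t := by
  cases a <;> cases b <;> cases t <;> decide

section Propensities

variable {pt php : ℝ} (hpt0 : 0 < pt) (hpt1 : pt < 1) (hphp0 : 0 < php) (hphp1 : php < 1)
  (c : Fin N → C)

include hpt0 hpt1 hphp0 hphp1

lemma HP.marg_eq (i : Fin N) (t : Bool) :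
    designMeasure C N pt php {ω | treat c i ω = t}
      = ∑ b : Bool, boolBernoulliMeasure pt {b} * boolBernoulliMeasure php {xor b t} := by
  have hset : {ω : (C → Bool) × (Fin N → Bool) | treat c i ω = t}
      = ⋃ b : Bool, (Set.univ.pi (HP.onePt (c i) {b})) ×ˢ
          (Set.univ.pi (HP.onePt i {xor b t})) := by
    ext ω
    simp only [Set.mem_setOf_eq, Set.mem_iUnion, Set.mem_prod, HP.mem_pi_onePt,
      Set.mem_singleton_iff, treat]
    constructor
    · intro h
      exact ⟨ω.1 (c i), rfl, by cases hb : ω.1 (c i) <;> cases t <;> simp_all⟩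
    · rintro ⟨b, hb, hf⟩
      rw [hb, hf]
      cases b <;> cases t <;> simp
  rw [hset, measure_iUnion ?_ (fun _ => MeasurableSet.of_discrete), tsum_fintype]
  · congr 1
    ext b
    rw [HP.cylinder_measure, HP.prod_onePt _ (HP.bern_prob hpt0.le hpt1.le).measure_univ,
      HP.prod_onePt _ (HP.bern_prob hphp0.le hphp1.le).measure_univ]
  · intro b b' hbb'
    refine Set.disjoint_left.2 fun ω h1 h2 => hbb' ?_
    rw [Set.mem_prod, HP.mem_pi_onePt, Set.mem_singleton_iff] at h1 h2
    exact h1.1.symm.trans h2.1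

lemma HP.joint_diff {i j : Fin N} (hcc : c i ≠ c j) (t1 t2 : Bool) :
    designMeasure C N pt php {ω | treat c i ω = t1 ∧ treat c j ω = t2}
      = (∑ b : Bool, boolBernoulliMeasure pt {b} * boolBernoulliMeasure php {xor b t1})
        * ∑ b : Bool, boolBernoulliMeasure pt {b} * boolBernoulliMeasure php {xor b t2} := by
  have hij : i ≠ j := fun h => hcc (by rw [h])
  have hset : {ω : (C → Bool) × (Fin N → Bool) | treat c i ω = t1 ∧ treat c j ω = t2}
      = ⋃ bb : Bool × Bool, (Set.univ.pi (HP.twoPt (c i) (c j) {bb.1} {bb.2})) ×ˢ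
          (Set.univ.pi (HP.twoPt i j {xor bb.1 t1} {xor bb.2 t2})) := by
    ext ω
    simp only [Set.mem_setOf_eq, Set.mem_iUnion, Set.mem_prod, HP.mem_pi_twoPt hcc,
      HP.mem_pi_twoPt hij, Set.mem_singleton_iff, treat]
    constructor
    · rintro ⟨h1, h2⟩
      exact ⟨(ω.1 (c i), ω.1 (c j)), ⟨rfl, rfl⟩,
        (HP.xor_eq_iff _ _ _).1 h1, (HP.xor_eq_iff _ _ _).1 h2⟩
    · rintro ⟨bb, ⟨hb1, hb2⟩, hf1, hf2⟩
      rw [hb1, hb2, hf1, hf2]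
      constructor <;> [skip; skip] <;>
        (cases bb.1 <;> cases bb.2 <;> cases t1 <;> cases t2 <;> simp)
  rw [hset, measure_iUnion ?_ (fun _ => MeasurableSet.of_discrete), tsum_fintype]
  · have hpiece : ∀ bb : Bool × Bool,
        designMeasure C N pt php ((Set.univ.pi (HP.twoPt (c i) (c j) {bb.1} {bb.2})) ×ˢ
          (Set.univ.pi (HP.twoPt i j {xor bb.1 t1} {xor bb.2 t2})))
        = (boolBernoulliMeasure pt {bb.1} * boolBernoulliMeasure php {xor bb.1 t1})
          * (boolBernoulliMeasure pt {bb.2} * boolBernoulliMeasure php {xor bb.2 t2}) := by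
      intro bb
      rw [HP.cylinder_measure, HP.prod_twoPt _ (HP.bern_prob hpt0.le hpt1.le).measure_univ hcc,
        HP.prod_twoPt _ (HP.bern_prob hphp0.le hphp1.le).measure_univ hij]
      ring
    simp only [hpiece]
    rw [Fintype.sum_prod_type, Finset.sum_mul_sum]
  · intro bb bb' hne
    refine Set.disjoint_left.2 fun ω h1 h2 => hne ?_
    rw [Set.mem_prod, HP.mem_pi_twoPt hcc, HP.mem_pi_twoPt hij] at h1 h2
    simp only [Set.mem_singleton_iff] at h1 h2
    exact Prod.ext (h1.1.1.symm.trans h2.1.1) (h1.1.2.symm.trans h2.1.2)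

lemma HP.joint_diag (i : Fin N) (t1 t2 : Bool) :
    designMeasure C N pt php {ω | treat c i ω = t1 ∧ treat c i ω = t2}
      = if t1 = t2 then designMeasure C N pt php {ω | treat c i ω = t1} else 0 := by
  split
  · next h => subst h; congr 1; ext ω; simp
  · next h =>
    convert measure_empty (μ := designMeasure C N pt php)
    ext ω
    simp only [Set.mem_setOf_eq, Set.mem_empty_iff_false, iff_false, not_and]
    intro h1 h2
    exact h (h1 ▸ h2 ▸ rfl)

lemma HP.joint_same_ne_zero {i j : Fin N} (hij : i ≠ j) (hcc : c i = c j) (t1 t2 : Bool) :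
    designMeasure C N pt php {ω | treat c i ω = t1 ∧ treat c j ω = t2} ≠ 0 := by
  have hsub : (Set.univ.pi (HP.onePt (c i) {false})) ×ˢ
      (Set.univ.pi (HP.twoPt i j {xor false t1} {xor false t2}))
      ⊆ {ω : (C → Bool) × (Fin N → Bool) | treat c i ω = t1 ∧ treat c j ω = t2} := by
    rintro ω ⟨h1, h2⟩
    rw [HP.mem_pi_onePt, Set.mem_singleton_iff] at h1
    rw [HP.mem_pi_twoPt hij] at h2
    simp only [Set.mem_singleton_iff] at h2
    constructor
    · simp [treat, h1, h2.1]
    · simp [treat, ← hcc, h1, h2.2]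
  intro h0
  have hle := measure_mono (μ := designMeasure C N pt php) hsub
  rw [h0, le_zero_iff, HP.cylinder_measure,
    HP.prod_onePt _ (HP.bern_prob hpt0.le hpt1.le).measure_univ,
    HP.prod_twoPt _ (HP.bern_prob hphp0.le hphp1.le).measure_univ hij] at hle
  exact (mul_ne_zero (HP.bern_singleton_pos hpt0 hpt1 false)
    (mul_ne_zero (HP.bern_singleton_pos hphp0 hphp1 _)
      (HP.bern_singleton_pos hphp0 hphp1 _))) hle

lemma HP.margProp_pos (i : Fin N) (t : Bool) : 0 < margProp pt php c i t := by
  haveI := HP.design_prob (C := C) (N := N) hpt0.le hpt1.le hphp0.le hphp1.le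
  rw [margProp]
  refine ENNReal.toReal_pos ?_ (measure_ne_top _ _)
  rw [HP.marg_eq hpt0 hpt1 hphp0 hphp1]
  intro h
  rw [Finset.sum_eq_zero_iff] at h
  exact (mul_ne_zero (HP.bern_singleton_pos hpt0 hpt1 false)
    (HP.bern_singleton_pos hphp0 hphp1 _)) (h false (Finset.mem_univ _))

lemma HP.jointProp_eq_mul {i j : Fin N} (hcc : c i ≠ c j) (t1 t2 : Bool) :
    jointProp pt php c i j t1 t2 = margProp pt php c i t1 * margProp pt php c j t2 := by
  rw [jointProp, margProp, margProp, HP.joint_diff hpt0 hpt1 hphp0 hphp1 c hcc,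
    HP.marg_eq hpt0 hpt1 hphp0 hphp1, HP.marg_eq hpt0 hpt1 hphp0 hphp1, ENNReal.toReal_mul]

lemma HP.jointProp_diag_eq (i : Fin N) (t1 t2 : Bool) :
    jointProp pt php c i i t1 t2 = if t1 = t2 then margProp pt php c i t1 else 0 := by
  rw [jointProp, HP.joint_diag hpt0 hpt1 hphp0 hphp1]
  split <;> simp [margProp]

lemma HP.jointProp_pos {i j : Fin N} (hij : i ≠ j) (hcc : c i = c j) (t1 t2 : Bool) :
    0 < jointProp pt php c i j t1 t2 := by
  haveI := HP.design_prob (C := C) (N := N) hpt0.le hpt1.le hphp0.le hphp1.le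
  exact ENNReal.toReal_pos (HP.joint_same_ne_zero hpt0 hpt1 hphp0 hphp1 c hij hcc t1 t2)
    (measure_ne_top _ _)

end Propensities

end AuxMeasure

section AuxIntegral

variable {Ω : Type*} [Fintype Ω] [MeasurableSpace Ω] [DiscreteMeasurableSpace Ω]
  (P : Measure Ω) [IsProbabilityMeasure P]

lemma HP.integral_ite (Q : Ω → Prop) [DecidablePred Q] (a : ℝ) :
    ∫ ω, (if Q ω then a else 0) ∂P = a * (P {ω | Q ω}).toReal := by
  have h : (fun ω => if Q ω then a else 0) = Set.indicator {ω | Q ω} (fun _ => a) := by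
    ext ω; simp [Set.indicator]
  rw [h, integral_indicator_const _ (MeasurableSet.of_discrete), smul_eq_mul, mul_comm]
  rfl

theorem HP.cov_eq (X Y : Ω → ℝ) :
    cov P X Y = (∫ ω, X ω * Y ω ∂P) - (∫ ω, X ω ∂P) * ∫ ω, Y ω ∂P := by
  have hw : ∑ ω, (P {ω}).toReal = 1 := by
    rw [← ENNReal.toReal_sum (fun _ _ => measure_ne_top _ _), ← tsum_fintype (L := SummationFilter.unconditional _),
      ← measure_iUnion (fun a b hab => Set.disjoint_singleton.2 hab)
        (fun _ => MeasurableSet.of_discrete), Set.iUnion_of_singleton, measure_univ]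
    simp
  simp only [cov, integral_fintype (Integrable.of_finite), smul_eq_mul, measureReal_def]
  set EX := ∑ ω, (P {ω}).toReal * X ω
  set EY := ∑ ω, (P {ω}).toReal * Y ω
  have h : ∀ ω : Ω, (P {ω}).toReal * ((X ω - EX) * (Y ω - EY))
      = (P {ω}).toReal * (X ω * Y ω) - EX * ((P {ω}).toReal * Y ω)
        - EY * ((P {ω}).toReal * X ω) + (EX * EY) * (P {ω}).toReal := by
    intro ω; ring
  simp only [h, Finset.sum_add_distrib, Finset.sum_sub_distrib, ← Finset.mul_sum, hw]
  ring

theorem HP.var_eq_cov (X : Ω → ℝ) : variance X P = cov P X X := by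
  rw [cov, variance_eq_integral (Measurable.of_discrete).aemeasurable]
  congr 1
  ext ω
  simp [sq]

end AuxIntegral

set_option maxHeartbeats 3000000 in
/-- Under the hole-punching graph-cluster randomization design with `0 < p_t < 1` and
`0 < p_hp < 1`, if all potential outcomes are non-negative then the plug-in variance
estimator `V̂ar[τ̂] = V̂ar[μ̂(1)] + V̂ar[μ̂(0)] − 2·Ĉov[μ̂(1), μ̂(0)]` for
`τ̂ = μ̂(1) − μ̂(0)` is conservative: `E[V̂ar[τ̂]] ≥ Var[τ̂]`. -/
theorem ate_variance_estimator_conservative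
    {C : Type*} [Fintype C] [DecidableEq C] {N : ℕ} (hN : 1 ≤ N)
    (pt php : ℝ) (hpt0 : 0 < pt) (hpt1 : pt < 1) (hphp0 : 0 < php) (hphp1 : php < 1)
    (c : Fin N → C) (Y : Fin N → Bool → ℝ) (hY : ∀ (i : Fin N) (t : Bool), 0 ≤ Y i t)
    (p : Bool → ℝ) (hp : ∀ (i : Fin N) (t : Bool), margProp pt php c i t = p t)
    (pj : Bool → Bool → ℝ)
    (hpj : ∀ (i j : Fin N) (t1 t2 : Bool), i ≠ j → c i = c j →
      jointProp pt php c i j t1 t2 = pj t1 t2) :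
    variance (fun ω => htEst pt php c Y true ω - htEst pt php c Y false ω)
        (designMeasure C N pt php)
      ≤ ∫ ω, (varHat c Y p pj true ω + varHat c Y p pj false ω
          - 2 * covHat c Y p pj true false ω) ∂(designMeasure C N pt php) := by
  classical
  haveI : IsProbabilityMeasure (designMeasure C N pt php) :=
    HP.design_prob hpt0.le hpt1.le hphp0.le hphp1.le
  set P := designMeasure C N pt php with hPdef
  have i0 : Fin N := ⟨0, hN⟩
  have hppos : ∀ t, 0 < p t := fun t => hp i0 t ▸ HP.margProp_pos hpt0 hpt1 hphp0 hphp1 c i0 t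
  have hpne : ∀ t, p t ≠ 0 := fun t => (hppos t).ne'
  have hJdiag : ∀ (i : Fin N) (t1 t2 : Bool),
      jointProp pt php c i i t1 t2 = if t1 = t2 then p t1 else 0 := by
    intro i t1 t2
    rw [HP.jointProp_diag_eq hpt0 hpt1 hphp0 hphp1 c i t1 t2, hp i t1]
  have hJind : ∀ (i j : Fin N) (t1 t2 : Bool), c i ≠ c j →
      jointProp pt php c i j t1 t2 = p t1 * p t2 := by
    intro i j t1 t2 h
    rw [HP.jointProp_eq_mul hpt0 hpt1 hphp0 hphp1 c h, hp i t1, hp j t2]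
  have hJpos : ∀ (i j : Fin N) (t1 t2 : Bool), i ≠ j → c i = c j →
      0 < jointProp pt php c i j t1 t2 :=
    fun i j t1 t2 hij hcc => HP.jointProp_pos hpt0 hpt1 hphp0 hphp1 c hij hcc t1 t2
  -- basic expectations
  have hEset : ∀ (t : Bool) (i : Fin N), (P {ω | treat c i ω = t}).toReal = p t :=
    fun t i => hp i t
  have hJP : ∀ (t1 t2 : Bool) (i j : Fin N),
      (P {ω | treat c i ω = t1 ∧ treat c j ω = t2}).toReal = jointProp pt php c i j t1 t2 :=
    fun _ _ _ _ => rfl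
  have hEf : ∀ (t : Bool) (i : Fin N),
      ∫ ω, (if treat c i ω = t then Y i t / p t else 0) ∂P = Y i t := by
    intro t i
    rw [HP.integral_ite P (fun ω => treat c i ω = t) (Y i t / p t), hEset t i,
      div_mul_cancel₀ _ (hpne t)]
  have hEff : ∀ (t1 t2 : Bool) (i j : Fin N),
      ∫ ω, (if treat c i ω = t1 then Y i t1 / p t1 else 0)
        * (if treat c j ω = t2 then Y j t2 / p t2 else 0) ∂P
      = Y i t1 * Y j t2 * (jointProp pt php c i j t1 t2 / (p t1 * p t2)) := by
    intro t1 t2 i j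
    have h1 : ∀ ω, (if treat c i ω = t1 then Y i t1 / p t1 else 0)
        * (if treat c j ω = t2 then Y j t2 / p t2 else 0)
        = if treat c i ω = t1 ∧ treat c j ω = t2 then (Y i t1 / p t1) * (Y j t2 / p t2)
          else 0 := by
      intro ω
      by_cases h1 : treat c i ω = t1 <;> by_cases h2 : treat c j ω = t2 <;> simp [h1, h2]
    simp only [h1]
    rw [HP.integral_ite P (fun ω => treat c i ω = t1 ∧ treat c j ω = t2) _, hJP]
    field_simp
  have hht : ∀ t : Bool, htEst pt php c Y t
      = fun ω => (1/(N:ℝ)) * ∑ i, (if treat c i ω = t then Y i t / p t else 0) := by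
    intro t
    funext ω
    simp only [htEst, hp]
  have hEht : ∀ t : Bool, ∫ ω, htEst pt php c Y t ω ∂P = (1/(N:ℝ)) * ∑ i, Y i t := by
    intro t
    simp only [hht]
    rw [integral_const_mul, integral_finset_sum _ (fun i _ => Integrable.of_finite)]
    exact congrArg _ (Finset.sum_congr rfl fun i _ => hEf t i)
  have hEhtht : ∀ t1 t2 : Bool, ∫ ω, htEst pt php c Y t1 ω * htEst pt php c Y t2 ω ∂P
      = (1/(N:ℝ)^2) * ∑ i, ∑ j,
          Y i t1 * Y j t2 * (jointProp pt php c i j t1 t2 / (p t1 * p t2)) := by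
    intro t1 t2
    simp only [hht]
    have h2 : ∀ ω : (C → Bool) × (Fin N → Bool),
        ((1/(N:ℝ)) * ∑ i, (if treat c i ω = t1 then Y i t1 / p t1 else 0))
          * ((1/(N:ℝ)) * ∑ j, (if treat c j ω = t2 then Y j t2 / p t2 else 0))
        = (1/(N:ℝ)^2) * ∑ i, ∑ j, (if treat c i ω = t1 then Y i t1 / p t1 else 0)
            * (if treat c j ω = t2 then Y j t2 / p t2 else 0) := by
      intro ω
      rw [← Finset.sum_mul_sum]
      ring
    simp only [h2]
    rw [integral_const_mul, integral_finset_sum _ (fun i _ => Integrable.of_finite)]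
    refine congrArg _ (Finset.sum_congr rfl fun i _ => ?_)
    rw [integral_finset_sum _ (fun j _ => Integrable.of_finite)]
    exact Finset.sum_congr rfl fun j _ => hEff t1 t2 i j
  have hcov : ∀ t1 t2 : Bool, cov P (htEst pt php c Y t1) (htEst pt php c Y t2)
      = (1/(N:ℝ)^2) * ∑ i, ∑ j,
          Y i t1 * Y j t2 * (jointProp pt php c i j t1 t2 / (p t1 * p t2) - 1) := by
    intro t1 t2
    rw [HP.cov_eq, hEhtht t1 t2, hEht t1, hEht t2]
    have hprod : ((1/(N:ℝ)) * ∑ i, Y i t1) * ((1/(N:ℝ)) * ∑ j, Y j t2)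
        = (1/(N:ℝ)^2) * ∑ i, ∑ j, Y i t1 * Y j t2 := by
      rw [← Finset.sum_mul_sum]
      ring
    rw [hprod]
    have key : ∀ i j : Fin N, Y i t1 * Y j t2 * (jointProp pt php c i j t1 t2
          / (p t1 * p t2) - 1)
        = Y i t1 * Y j t2 * (jointProp pt php c i j t1 t2 / (p t1 * p t2))
          - Y i t1 * Y j t2 := fun i j => by ring
    simp only [key, Finset.sum_sub_distrib]
    ring
  have hvar : variance (fun ω => htEst pt php c Y true ω - htEst pt php c Y false ω) P
      = cov P (htEst pt php c Y true) (htEst pt php c Y true)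
        + cov P (htEst pt php c Y false) (htEst pt php c Y false)
        - 2 * cov P (htEst pt php c Y true) (htEst pt php c Y false) := by
    rw [HP.var_eq_cov, HP.cov_eq, HP.cov_eq, HP.cov_eq, HP.cov_eq,
      integral_sub Integrable.of_finite Integrable.of_finite]
    have h3 : ∀ ω : (C → Bool) × (Fin N → Bool),
        (htEst pt php c Y true ω - htEst pt php c Y false ω)
          * (htEst pt php c Y true ω - htEst pt php c Y false ω)
        = htEst pt php c Y true ω * htEst pt php c Y true ω
          - 2 * (htEst pt php c Y true ω * htEst pt php c Y false ω)
          + htEst pt php c Y false ω * htEst pt php c Y false ω := fun ω => by ring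
    simp only [h3]
    rw [integral_add Integrable.of_finite Integrable.of_finite,
      integral_sub Integrable.of_finite Integrable.of_finite, integral_const_mul]
    ring
  -- expectations of the estimator pieces
  have hES : ∀ t1 t2 : Bool, ∫ ω, (∑ k : C, Shat c Y t1 t2 k ω) ∂P
      = ∑ i, ∑ j, (if c i = c j then Y i t1 * Y j t2 * jointProp pt php c i j t1 t2
          else 0) := by
    intro t1 t2
    have hpoint : ∀ ω : (C → Bool) × (Fin N → Bool), (∑ k : C, Shat c Y t1 t2 k ω)
        = ∑ i, ∑ j, (if c i = c j then
            (if treat c i ω = t1 ∧ treat c j ω = t2 then Y i t1 * Y j t2 else 0) else 0) := by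
      intro ω
      have hsplit : ∀ (pr : Prop) [Decidable pr] (g : Fin N → ℝ),
          (if pr then (∑ j, g j) else 0) = ∑ j, if pr then g j else 0 := by
        intro pr _ g; split <;> simp
      unfold Shat
      simp only [Finset.sum_filter, hsplit]
      rw [Finset.sum_comm]
      refine Finset.sum_congr rfl fun i _ => ?_
      rw [Finset.sum_comm]
      refine Finset.sum_congr rfl fun j _ => ?_
      rw [Finset.sum_eq_single (c i)]
      · by_cases h1 : treat c i ω = t1 <;> by_cases h2 : treat c j ω = t2 <;>
          by_cases h3 : c i = c j <;> simp [h1, h2, h3, eq_comm]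
      · intro b _ hb
        rw [if_neg]
        rintro ⟨h, -⟩
        exact hb h.symm
      · intro h
        exact absurd (Finset.mem_univ (c i)) h
    simp only [hpoint]
    rw [integral_finset_sum _ (fun i _ => Integrable.of_finite)]
    refine Finset.sum_congr rfl fun i _ => ?_
    rw [integral_finset_sum _ (fun j _ => Integrable.of_finite)]
    refine Finset.sum_congr rfl fun j _ => ?_
    by_cases hcc : c i = c j
    · simp only [if_pos hcc]
      rw [HP.integral_ite P (fun ω => treat c i ω = t1 ∧ treat c j ω = t2) _, hJP]
    · simp only [if_neg hcc, integral_zero]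
  have hEQ : ∀ t : Bool, ∫ ω, Qhat c Y t ω ∂P = ∑ i, Y i t ^ 2 * p t := by
    intro t
    have hpoint : ∀ ω : (C → Bool) × (Fin N → Bool), Qhat c Y t ω
        = ∑ i, (if treat c i ω = t then Y i t ^ 2 else 0) := by
      intro ω; unfold Qhat; rw [Finset.sum_filter]
    simp only [hpoint]
    rw [integral_finset_sum _ (fun i _ => Integrable.of_finite)]
    exact Finset.sum_congr rfl fun i _ => by
      rw [HP.integral_ite P (fun ω => treat c i ω = t) _, hEset]
  have hEvar : ∀ t : Bool, ∫ ω, varHat c Y p pj t ω ∂P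
      = (1/(N:ℝ)^2) * ((1/(p t)^2 - 1/pj t t)
            * (∑ i, ∑ j, (if c i = c j then Y i t * Y j t * jointProp pt php c i j t t
                else 0))
          + (1/pj t t - 1/p t) * (∑ i, Y i t ^ 2 * p t)) := by
    intro t
    unfold varHat
    rw [integral_const_mul, integral_add Integrable.of_finite Integrable.of_finite,
      integral_const_mul, integral_const_mul, hES, hEQ]
  have hEcov : ∫ ω, covHat c Y p pj true false ω ∂P
      = (1/(N:ℝ)^2) * ((1/(p true * p false) - 1/pj true false)
            * (∑ i, ∑ j, (if c i = c j then
                Y i true * Y j false * jointProp pt php c i j true false else 0))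
          - (∑ i, Y i true ^ 2 * p true)/(2 * p true)
          - (∑ i, Y i false ^ 2 * p false)/(2 * p false)) := by
    unfold covHat
    rw [integral_const_mul, integral_sub Integrable.of_finite Integrable.of_finite,
      integral_sub Integrable.of_finite Integrable.of_finite, integral_const_mul,
      integral_div, integral_div, hES, hEQ, hEQ]
  -- assemble
  rw [integral_sub Integrable.of_finite Integrable.of_finite,
    integral_add Integrable.of_finite Integrable.of_finite, integral_const_mul,
    hvar, hcov, hcov, hcov, hEvar, hEvar, hEcov]
  have hpair : ∀ i j : Fin N,
      Y i true * Y j true * (jointProp pt php c i j true true / (p true * p true) - 1)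
        + Y i false * Y j false * (jointProp pt php c i j false false / (p false * p false) - 1)
        - 2 * (Y i true * Y j false * (jointProp pt php c i j true false / (p true * p false) - 1))
      ≤ (1/(p true)^2 - 1/pj true true)
          * (if c i = c j then Y i true * Y j true * jointProp pt php c i j true true else 0)
        + (1/pj true true - 1/p true) * (if j = i then Y i true ^ 2 * p true else 0)
        + ((1/(p false)^2 - 1/pj false false)
            * (if c i = c j then Y i false * Y j false * jointProp pt php c i j false false else 0)
          + (1/pj false false - 1/p false) * (if j = i then Y i false ^ 2 * p false else 0))
        - 2 * ((1/(p true * p false) - 1/pj true false)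
            * (if c i = c j then Y i true * Y j false * jointProp pt php c i j true false else 0)
          - (if j = i then Y i true ^ 2 * p true else 0)/(2 * p true)
          - (if j = i then Y i false ^ 2 * p false else 0)/(2 * p false)) := by
    intro i j
    rcases eq_or_ne i j with rfl | hij
    · have d11 : jointProp pt php c i i true true = p true := by rw [hJdiag]; simp
      have d00 : jointProp pt php c i i false false = p false := by rw [hJdiag]; simp
      have d10 : jointProp pt php c i i true false = 0 := by rw [hJdiag]; simp
      rw [d11, d00, d10]
      simp only [eq_self_iff_true, if_true]
      have key : (1/(p true)^2 - 1/pj true true) * (Y i true * Y i true * p true)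
            + (1/pj true true - 1/p true) * (Y i true ^ 2 * p true)
            + ((1/(p false)^2 - 1/pj false false) * (Y i false * Y i false * p false)
              + (1/pj false false - 1/p false) * (Y i false ^ 2 * p false))
            - 2 * ((1/(p true * p false) - 1/pj true false) * (Y i true * Y i false * 0)
              - (Y i true ^ 2 * p true)/(2 * p true)
              - (Y i false ^ 2 * p false)/(2 * p false))
            - (Y i true * Y i true * (p true / (p true * p true) - 1)
              + Y i false * Y i false * (p false / (p false * p false) - 1)
              - 2 * (Y i true * Y i false * (0 / (p true * p false) - 1)))
          = (Y i true - Y i false)^2 := by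
        have h1 := hpne true
        have h2 := hpne false
        field_simp
        ring
      linarith [key, sq_nonneg (Y i true - Y i false)]
    · rcases eq_or_ne (c i) (c j) with hcc | hcc
      · have e11 := hpj i j true true hij hcc
        have e00 := hpj i j false false hij hcc
        have e10 := hpj i j true false hij hcc
        have n11 : pj true true ≠ 0 := e11 ▸ (hJpos i j true true hij hcc).ne'
        have n00 : pj false false ≠ 0 := e00 ▸ (hJpos i j false false hij hcc).ne'
        have n10 : pj true false ≠ 0 := e10 ▸ (hJpos i j true false hij hcc).ne'
        simp only [hcc, eq_self_iff_true, if_true, if_neg (Ne.symm hij)]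
        rw [e11, e00, e10]
        apply le_of_eq
        have h1 := hpne true
        have h2 := hpne false
        field_simp
        ring
      · have hijne : j ≠ i := Ne.symm hij
        simp only [if_neg hcc, if_neg hijne]
        rw [hJind i j true true hcc, hJind i j false false hcc, hJind i j true false hcc,
          div_self (mul_ne_zero (hpne true) (hpne true)),
          div_self (mul_ne_zero (hpne false) (hpne false)),
          div_self (mul_ne_zero (hpne true) (hpne false))]
        norm_num
  have hN2 : (0:ℝ) ≤ 1/(N:ℝ)^2 := by positivity
  -- rewrite both sides as (1/N²) * double sums
  have hdiagsum : ∀ x : Fin N → ℝ, (∑ i, x i) = ∑ i, ∑ j, (if j = i then x i else 0) := by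
    intro x
    refine Finset.sum_congr rfl fun i _ => ?_
    rw [Finset.sum_ite_eq' Finset.univ i (fun _ => x i)]
    simp
  calc (1/(N:ℝ)^2) * (∑ i, ∑ j, Y i true * Y j true
          * (jointProp pt php c i j true true / (p true * p true) - 1))
        + (1/(N:ℝ)^2) * (∑ i, ∑ j, Y i false * Y j false
          * (jointProp pt php c i j false false / (p false * p false) - 1))
        - 2 * ((1/(N:ℝ)^2) * (∑ i, ∑ j, Y i true * Y j false
          * (jointProp pt php c i j true false / (p true * p false) - 1)))
      = (1/(N:ℝ)^2) * ∑ i, ∑ j,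
          (Y i true * Y j true * (jointProp pt php c i j true true / (p true * p true) - 1)
            + Y i false * Y j false * (jointProp pt php c i j false false / (p false * p false) - 1)
            - 2 * (Y i true * Y j false * (jointProp pt php c i j true false / (p true * p false) - 1))) := by
        simp only [Finset.sum_add_distrib, Finset.sum_sub_distrib, ← Finset.mul_sum]
        ring
    _ ≤ (1/(N:ℝ)^2) * ∑ i, ∑ j,
          ((1/(p true)^2 - 1/pj true true)
              * (if c i = c j then Y i true * Y j true * jointProp pt php c i j true true else 0)
            + (1/pj true true - 1/p true) * (if j = i then Y i true ^ 2 * p true else 0)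
            + ((1/(p false)^2 - 1/pj false false)
                * (if c i = c j then Y i false * Y j false * jointProp pt php c i j false false else 0)
              + (1/pj false false - 1/p false)
                * (if j = i then Y i false ^ 2 * p false else 0))
            - 2 * ((1/(p true * p false) - 1/pj true false)
                * (if c i = c j then Y i true * Y j false * jointProp pt php c i j true false else 0)
              - (if j = i then Y i true ^ 2 * p true else 0)/(2 * p true)
              - (if j = i then Y i false ^ 2 * p false else 0)/(2 * p false))) := by
        apply mul_le_mul_of_nonneg_left _ hN2
        exact Finset.sum_le_sum fun i _ => Finset.sum_le_sum fun j _ => hpair i j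
    _ = (1/(N:ℝ)^2) * ((1/(p true)^2 - 1/pj true true)
            * (∑ i, ∑ j, (if c i = c j then Y i true * Y j true * jointProp pt php c i j true true else 0))
          + (1/pj true true - 1/p true) * (∑ i, Y i true ^ 2 * p true))
        + (1/(N:ℝ)^2) * ((1/(p false)^2 - 1/pj false false)
            * (∑ i, ∑ j, (if c i = c j then Y i false * Y j false * jointProp pt php c i j false false
                else 0))
          + (1/pj false false - 1/p false) * (∑ i, Y i false ^ 2 * p false))
        - 2 * ((1/(N:ℝ)^2) * ((1/(p true * p false) - 1/pj true false)
            * (∑ i, ∑ j, (if c i = c j then Y i true * Y j false * jointProp pt php c i j true false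
                else 0))
          - (∑ i, Y i true ^ 2 * p true)/(2 * p true)
          - (∑ i, Y i false ^ 2 * p false)/(2 * p false))) := by
        rw [hdiagsum (fun i => Y i true ^ 2 * p true),
          hdiagsum (fun i => Y i false ^ 2 * p false)]
        simp only [Finset.sum_add_distrib, Finset.sum_sub_distrib, ← Finset.mul_sum,
          ← Finset.sum_div]
        ring
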